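/- For the identical-decision-number strategy with parameter k on n draws, the overall win probability equals k^n · ( Σ_{r=1}^{n} 1/((n-r+1)·k^{n-r+1}) - H_{n-1} ), where H_{n-1} = Σ_{j=1}^{n-1} 1/j is the (n-1)-st harmonic number (equivalently ψ(n) + γ). -/

import Mathlib

open MeasureTheory Set

lemma harmonic_shift (n : ℕ) (hn : 2 ≤ n) :
    ∑ r ∈ Finset.range (n-1), 1 / ((n - r : ℕ) : ℝ)
      = (∑ j ∈ Finset.Icc 1 (n-1), (1:ℝ)/j) - 1 + 1/n := by
  have h1 : ∑ r ∈ Finset.range (n-1), 1 / ((n - r : ℕ) : ℝ) = ∑ i ∈ Finset.range (n-1), 1 / ((i + 2 : ℕ) : ℝ) := by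
    rw [← Finset.sum_range_reflect]
    refine Finset.sum_congr rfl fun i hi => ?_
    simp only [Finset.mem_range] at hi
    congr 2
    omega
  have h2 : ∑ j ∈ Finset.Icc 1 (n-1), (1:ℝ)/j = 1 + ∑ i ∈ Finset.range (n-2), 1 / ((i + 2 : ℕ) : ℝ) := by
    rw [show Finset.Icc 1 (n-1) = Finset.Ico 1 n by rw [← Finset.Ico_add_one_right_eq_Icc]; congr 1; omega,
      Finset.sum_Ico_eq_sum_range, show n - 1 = (n-2)+1 by omega, Finset.sum_range_succ']
    have e1 : ∀ i : ℕ, (1:ℝ) / ((1 + (i+1) : ℕ) : ℝ) = 1 / ((i+2 : ℕ) : ℝ) := fun i => by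
      congr 2; omega
    simp only [e1]
    norm_num [add_comm]
  have h3 : ∑ i ∈ Finset.range (n-1), 1 / ((i + 2 : ℕ) : ℝ)
      = ∑ i ∈ Finset.range (n-2), 1 / ((i + 2 : ℕ) : ℝ) + 1/n := by
    rw [show n - 1 = (n - 2) + 1 by omega, Finset.sum_range_succ]
    congr 2
    · push_cast [show n - 2 + 2 = n by omega]; ring
  rw [h1, h3, h2]
  ring



lemma rhs_sum (n : ℕ) (hn : 2 ≤ n) (k : ℝ) (hk0 : 0 < k) :
    k ^ n * (∑ r ∈ Finset.Icc 1 n, 1 / (((n - r + 1 : ℕ) : ℝ) * k ^ (n - r + 1)))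
      = ∑ s ∈ Finset.range n, k ^ s / ((n - s : ℕ) : ℝ) := by
  rw [Finset.mul_sum]
  rw [show Finset.Icc 1 n = Finset.Ico 1 (n+1) by rfl, Finset.sum_Ico_eq_sum_range]
  have h1 : n + 1 - 1 = n := by omega
  rw [h1]
  refine Finset.sum_congr rfl fun s hs => ?_
  simp only [Finset.mem_range] at hs
  have h2 : n - (1 + s) + 1 = n - s := by omega
  rw [h2]
  have h3 : k ^ n = k ^ s * k ^ (n - s) := by
    rw [← pow_add]; congr 1; omega
  have h4 : (0:ℝ) < ((n - s : ℕ) : ℝ) := by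
    have : 0 < n - s := by omega
    exact_mod_cast this
  rw [h3]
  field_simp


lemma algebra_main (n : ℕ) (hn : 2 ≤ n) (k : ℝ) (hk0 : 0 < k) :
    ∑ r ∈ Finset.range (n-1), k^r * (1 - k^(n-r)) / ((n-r:ℕ):ℝ) + (k^n/n + k^(n-1)*(1-k))
      = k ^ n *
          ((∑ r ∈ Finset.Icc 1 n, 1 / (((n - r + 1 : ℕ) : ℝ) * k ^ (n - r + 1)))
            - ∑ j ∈ Finset.Icc 1 (n - 1), (1 : ℝ) / j) := by
  conv_rhs => rw [mul_sub, rhs_sum n hn k hk0]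
  have e1 : ∑ r ∈ Finset.range (n-1), k^r * (1 - k^(n-r)) / ((n-r:ℕ):ℝ)
      = ∑ r ∈ Finset.range (n-1), (k^r / ((n-r:ℕ):ℝ) - k^n * (1 / ((n-r:ℕ):ℝ))) := by
    refine Finset.sum_congr rfl fun r hr => ?_
    simp only [Finset.mem_range] at hr
    have : k^r * k^(n-r) = k^n := by rw [← pow_add]; congr 1; omega
    field_simp
    ring_nf
    rw [← this]
    ring
  rw [e1, Finset.sum_sub_distrib, ← Finset.mul_sum, harmonic_shift n hn]
  have e2 : ∑ s ∈ Finset.range n, k^s / ((n-s:ℕ):ℝ)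
      = ∑ r ∈ Finset.range (n-1), k^r / ((n-r:ℕ):ℝ) + k^(n-1) := by
    rw [show n = (n-1)+1 by omega, Finset.sum_range_succ]
    rw [show (n-1)+1 = n by omega]
    congr 1
    rw [show n - (n-1) = 1 by omega]
    norm_num
  rw [e2]
  have hk : k^(n-1) * k = k^n := by rw [← pow_succ]; congr 1; omega
  linear_combination -hk



lemma restrict_Iio (c : ℝ) (h0 : 0 ≤ c) (h1 : c ≤ 1) :
    (volume.restrict (Icc (0:ℝ) 1)) (Iio c) = ENNReal.ofReal c := by
  rw [Measure.restrict_apply measurableSet_Iio]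
  have : Iio c ∩ Icc (0:ℝ) 1 = Ico 0 c := by
    ext x; simp only [mem_inter_iff, mem_Iio, mem_Icc, mem_Ico]
    constructor
    · rintro ⟨h, h2, h3⟩; exact ⟨h2, h⟩
    · rintro ⟨h2, h⟩; exact ⟨h, h2, le_trans h.le h1⟩
  rw [this, Real.volume_Ico, sub_zero]

lemma restrict_Iic (c : ℝ) (h0 : 0 ≤ c) (h1 : c ≤ 1) :
    (volume.restrict (Icc (0:ℝ) 1)) (Iic c) = ENNReal.ofReal c := by
  rw [Measure.restrict_apply measurableSet_Iic]
  have : Iic c ∩ Icc (0:ℝ) 1 = Icc 0 c := by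
    ext x; simp only [mem_inter_iff, mem_Iic, mem_Icc]
    constructor
    · rintro ⟨h, h2, h3⟩; exact ⟨h2, h⟩
    · rintro ⟨h2, h⟩; exact ⟨h, h2, le_trans h h1⟩
  rw [this, Real.volume_Icc, sub_zero]

lemma lint_pow (p : ℕ) (a b : ℝ) (ha : 0 ≤ a) (hab : a ≤ b) :
    ∫⁻ x in Set.Icc a b, ENNReal.ofReal (x^p) ∂volume
      = ENNReal.ofReal ((b^(p+1) - a^(p+1))/(p+1)) := by
  rw [← ofReal_integral_eq_lintegral_ofReal]
  · congr 1
    rw [MeasureTheory.integral_Icc_eq_integral_Ioc, ← intervalIntegral.integral_of_le hab,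
      integral_pow]
  · exact (continuous_pow p).integrableOn_Icc
  · exact (ae_restrict_iff' measurableSet_Icc).mpr (ae_of_all _ fun x hx =>
      pow_nonneg (le_trans ha hx.1) p)

lemma lint_min (mm : ℕ) (k : ℝ) (hk0 : 0 ≤ k) (hk1 : k ≤ 1) :
    ∫⁻ x in Set.Icc (0:ℝ) 1, ENNReal.ofReal ((min k x)^mm) ∂volume
      = ENNReal.ofReal (k^(mm+1)/(mm+1) + k^mm*(1-k)) := by
  have hcont : Continuous fun x : ℝ => (min k x)^mm :=
    (continuous_const.min continuous_id).pow mm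
  rw [← ofReal_integral_eq_lintegral_ofReal]
  · congr 1
    rw [MeasureTheory.integral_Icc_eq_integral_Ioc, ← intervalIntegral.integral_of_le
      (by norm_num : (0:ℝ) ≤ 1)]
    rw [← intervalIntegral.integral_add_adjacent_intervals
      (a := 0) (b := k) (c := 1) (hcont.intervalIntegrable _ _) (hcont.intervalIntegrable _ _)]
    have e1 : ∫ x in (0:ℝ)..k, (min k x)^mm = ∫ x in (0:ℝ)..k, x^mm := by
      apply intervalIntegral.integral_congr
      intro x hx
      rw [Set.uIcc_of_le hk0] at hx
      simp only; rw [min_eq_right hx.2]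
    have e2 : ∫ x in k..(1:ℝ), (min k x)^mm = ∫ x in k..(1:ℝ), k^mm := by
      apply intervalIntegral.integral_congr
      intro x hx
      rw [Set.uIcc_of_le hk1] at hx
      simp only; rw [min_eq_left hx.1]
    rw [e1, e2, integral_pow, intervalIntegral.integral_const]
    simp only [smul_eq_mul]
    rw [zero_pow (by omega)]
    ring
  · exact hcont.integrableOn_Icc
  · refine (ae_restrict_iff' measurableSet_Icc).mpr (ae_of_all _ fun x hx => ?_)
    exact pow_nonneg (le_min hk0 hx.1) mm



lemma slice_eq (m : ℕ) (k : ℝ) (r : Fin (m+1)) (x : ℝ) :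
    {g : Fin m → ℝ |
      (∀ j : Fin (m+1), j < r → Fin.insertNth (α := fun _ => ℝ) r x g j < k ∧ ∃ i, Fin.insertNth (α := fun _ => ℝ) r x g j < Fin.insertNth (α := fun _ => ℝ) r x g i) ∧
      ((r : ℕ) < (m+1) - 1 → k ≤ x) ∧ ∀ i, Fin.insertNth (α := fun _ => ℝ) r x g i ≤ x}
    = if ((r : ℕ) < m → k ≤ x) then
        Set.pi Set.univ (fun j : Fin m => if (j : ℕ) < (r : ℕ) then Set.Iio (min k x) else Set.Iic x)
      else ∅ := by
  have hsame : ∀ g : Fin m → ℝ, Fin.insertNth (α := fun _ => ℝ) r x g r = x := fun g => Fin.insertNth_apply_same (α := fun _ => ℝ) r x g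
  split_ifs with hcond
  · ext g
    simp only [mem_setOf_eq, Set.mem_pi, Set.mem_univ, true_implies, hsame]
    constructor
    · rintro ⟨h1, h2, h3⟩
      intro j
      split_ifs with hj
      · have hlt : (j.castSucc : Fin (m+1)) < r := by
          rw [Fin.lt_def]; simpa using hj
        obtain ⟨hk', i, hi⟩ := h1 j.castSucc hlt
        have hx : Fin.insertNth (α := fun _ => ℝ) r x g j.castSucc < x := lt_of_lt_of_le hi (h3 i)
        have hsa : r.succAbove j = j.castSucc := Fin.succAbove_of_castSucc_lt r j hlt
        rw [← hsa, Fin.insertNth_apply_succAbove] at hk' hx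
        exact lt_min hk' hx
      · have := h3 (r.succAbove j)
        rwa [Fin.insertNth_apply_succAbove] at this
    · intro hg
      have hall : ∀ i, Fin.insertNth (α := fun _ => ℝ) r x g i ≤ x := by
        intro i
        rcases eq_or_ne i r with rfl | hne
        · rw [hsame]
        · obtain ⟨j, rfl⟩ := Fin.exists_succAbove_eq hne
          rw [Fin.insertNth_apply_succAbove]
          have hj := hg j
          split_ifs at hj with h
          · exact (lt_of_lt_of_le hj (min_le_right _ _)).le
          · exact hj
      refine ⟨?_, fun h => hcond (by omega), hall⟩
      intro j hlt
      have hne : j ≠ r := ne_of_lt hlt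
      obtain ⟨j', rfl⟩ := Fin.exists_succAbove_eq hne
      have hcs : j'.castSucc < r := (Fin.succAbove_lt_iff_castSucc_lt r j').mp hlt
      have hj' : (j' : ℕ) < (r : ℕ) := by
        rw [Fin.lt_def] at hcs; simpa using hcs
      have hj := hg j'
      rw [if_pos hj'] at hj
      rw [Fin.insertNth_apply_succAbove]
      refine ⟨lt_of_lt_of_le hj (min_le_left _ _), r, ?_⟩
      rw [hsame]
      exact lt_of_lt_of_le hj (min_le_right _ _)
  · ext g
    simp only [mem_setOf_eq, mem_empty_iff_false, iff_false]
    rintro ⟨h1, h2, h3⟩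
    push_neg at hcond
    exact absurd (h2 (by omega)) (not_le.mpr hcond.2)


lemma box_measure (m : ℕ) (k x : ℝ) (hk0 : 0 < k) (hk1 : k ≤ 1) (hx : x ∈ Icc (0:ℝ) 1)
    (rv : ℕ) (hrv : rv ≤ m) :
    Measure.pi (fun _ : Fin m => volume.restrict (Icc (0:ℝ) 1))
      (Set.pi Set.univ fun j : Fin m => if (j:ℕ) < rv then Iio (min k x) else Iic x)
    = ENNReal.ofReal (min k x) ^ rv * ENNReal.ofReal x ^ (m - rv) := by
  rw [Measure.pi_pi]
  have hm : ∀ j : Fin m,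
      (volume.restrict (Icc (0:ℝ) 1)) (if (j:ℕ) < rv then Iio (min k x) else Iic x)
      = (fun i : ℕ => if i < rv then ENNReal.ofReal (min k x) else ENNReal.ofReal x) (j : ℕ) := by
    intro j; dsimp only; split_ifs
    · exact restrict_Iio _ (le_min hk0.le hx.1) ((min_le_left _ _).trans hk1)
    · exact restrict_Iic _ hx.1 hx.2
  rw [Finset.prod_congr rfl (fun j _ => hm j),
    Fin.prod_univ_eq_prod_range (fun i : ℕ => if i < rv then ENNReal.ofReal (min k x) else ENNReal.ofReal x) m,
    ← Finset.prod_range_mul_prod_Ico _ hrv]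
  congr 1
  · rw [Finset.prod_congr rfl (fun i hi => if_pos (Finset.mem_range.mp hi)), Finset.prod_const,
      Finset.card_range]
  · rw [Finset.prod_congr rfl (fun i hi => if_neg (by simpa using (Finset.mem_Ico.mp hi).1)),
      Finset.prod_const, Nat.card_Ico]


lemma Er_meas (m : ℕ) (k : ℝ) (r : Fin (m+1)) :
    MeasurableSet {a : Fin (m+1) → ℝ |
      (∀ j, j < r → a j < k ∧ ∃ i, a j < a i) ∧ ((r:ℕ) < (m+1) - 1 → k ≤ a r) ∧ ∀ i, a i ≤ a r} := by
  rw [Set.setOf_and, Set.setOf_and]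
  refine MeasurableSet.inter ?_ (MeasurableSet.inter ?_ ?_)
  · rw [Set.setOf_forall]
    refine MeasurableSet.iInter fun j => ?_
    by_cases hj : j < r
    · simp only [hj, true_implies]
      rw [Set.setOf_and]
      refine (measurableSet_lt (measurable_pi_apply j) measurable_const).inter ?_
      rw [Set.setOf_exists]
      exact MeasurableSet.iUnion fun i =>
        measurableSet_lt (measurable_pi_apply j) (measurable_pi_apply i)
    · simp only [hj, false_implies, Set.setOf_true]
      exact MeasurableSet.univ
  · by_cases hc : (r:ℕ) < (m+1) - 1
    · simp only [hc, true_implies]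
      exact measurableSet_le measurable_const (measurable_pi_apply r)
    · simp only [hc, false_implies, Set.setOf_true]
      exact MeasurableSet.univ
  · rw [Set.setOf_forall]
    exact MeasurableSet.iInter fun i =>
      measurableSet_le (measurable_pi_apply i) (measurable_pi_apply r)


lemma Er_measure (m : ℕ) (k : ℝ) (hk0 : 0 < k) (hk1 : k ≤ 1) (r : Fin (m+1)) :
    (Measure.pi fun _ : Fin (m+1) => volume.restrict (Icc (0:ℝ) 1))
      {a | (∀ j, j < r → a j < k ∧ ∃ i, a j < a i) ∧ ((r:ℕ) < (m+1) - 1 → k ≤ a r) ∧ ∀ i, a i ≤ a r}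
    = ENNReal.ofReal (if (r:ℕ) < m then
        k^(r:ℕ) * (1 - k^(m+1-(r:ℕ))) / ((m+1-(r:ℕ) : ℕ) : ℝ)
      else k^(m+1)/((m+1 : ℕ) : ℝ) + k^m * (1-k)) := by
  set μ : Measure ℝ := volume.restrict (Icc (0:ℝ) 1) with hμ
  set ν : Measure (Fin m → ℝ) := Measure.pi (fun _ : Fin m => μ) with hν
  set E : Set (Fin (m+1) → ℝ) := {a | (∀ j, j < r → a j < k ∧ ∃ i, a j < a i) ∧
    ((r:ℕ) < (m+1) - 1 → k ≤ a r) ∧ ∀ i, a i ≤ a r} with hE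
  set e := MeasurableEquiv.piFinSuccAbove (fun _ : Fin (m+1) => ℝ) r with he
  have hmp := (MeasureTheory.measurePreserving_piFinSuccAbove (fun _ : Fin (m+1) => μ) r).symm e
  have h1 : (Measure.pi fun _ : Fin (m+1) => μ) E = (μ.prod ν) (⇑e.symm ⁻¹' E) :=
    (hmp.measure_preimage_equiv E).symm
  have h2 : (μ.prod ν) (⇑e.symm ⁻¹' E) = ∫⁻ x, ν (Prod.mk x ⁻¹' (⇑e.symm ⁻¹' E)) ∂μ :=
    Measure.prod_apply (e.symm.measurable (Er_meas m k r))
  have key : ∀ x : ℝ, (Prod.mk x ⁻¹' (⇑e.symm ⁻¹' E)) =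
      if ((r : ℕ) < m → k ≤ x) then
        Set.pi Set.univ (fun j : Fin m => if (j : ℕ) < (r : ℕ) then Set.Iio (min k x) else Set.Iic x)
      else ∅ := by
    intro x
    rw [← slice_eq m k r x]
    ext g
    simp only [mem_preimage, he, MeasurableEquiv.piFinSuccAbove_symm_apply, Fin.insertNthEquiv,
      Equiv.coe_fn_mk, hE, mem_setOf_eq, Fin.insertNth_apply_same]
  rw [h1, h2]
  by_cases hr : (r:ℕ) < m
  · have congr1 : ∀ x ∈ Icc (0:ℝ) 1, ν (Prod.mk x ⁻¹' (⇑e.symm ⁻¹' E))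
        = Set.indicator (Ici k) (fun x => ENNReal.ofReal (k^(r:ℕ) * x^(m - (r:ℕ)))) x := by
      intro x hx
      rw [key x]
      split_ifs with hc
      · have hkx : k ≤ x := hc hr
        rw [hν, box_measure m k x hk0 hk1 hx _ (by omega), Set.indicator_of_mem (mem_Ici.mpr hkx) _,
          min_eq_left hkx, ← ENNReal.ofReal_pow hk0.le, ← ENNReal.ofReal_pow hx.1,
          ← ENNReal.ofReal_mul (pow_nonneg hk0.le _)]
      · push_neg at hc
        rw [Set.indicator_of_notMem (by simpa using not_le.mpr hc.2)]
        simp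
    rw [hμ]
    rw [setLIntegral_congr_fun measurableSet_Icc congr1,
      lintegral_indicator measurableSet_Ici, Measure.restrict_restrict measurableSet_Ici]
    have hIcc : Ici k ∩ Icc (0:ℝ) 1 = Icc k 1 := by
      ext y; simp only [mem_inter_iff, mem_Ici, mem_Icc]
      constructor
      · rintro ⟨h, _, h2⟩; exact ⟨h, h2⟩
      · rintro ⟨h, h2⟩; exact ⟨h, le_trans hk0.le h, h2⟩
    have hint : ∀ x ∈ Icc k 1, ENNReal.ofReal (k^(r:ℕ) * x^(m - (r:ℕ)))
        = ENNReal.ofReal (k^(r:ℕ)) * ENNReal.ofReal (x^(m - (r:ℕ))) := fun x hx =>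
      ENNReal.ofReal_mul (pow_nonneg hk0.le _)
    rw [hIcc, setLIntegral_congr_fun measurableSet_Icc hint,
      lintegral_const_mul (ENNReal.ofReal (k^(r:ℕ)))
        ((continuous_pow (m - (r:ℕ))).measurable.ennreal_ofReal),
      lint_pow _ k 1 hk0.le hk1, if_pos hr,
      ← ENNReal.ofReal_mul (pow_nonneg hk0.le _)]
    congr 1
    have hc1 : m - (r:ℕ) + 1 = m + 1 - (r:ℕ) := by omega
    have hc2 : ((m - (r:ℕ) : ℕ) : ℝ) + 1 = ((m + 1 - (r:ℕ) : ℕ) : ℝ) := by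
      exact_mod_cast congrArg (Nat.cast (R := ℝ)) hc1
    rw [one_pow, hc1, hc2]
    ring
  · have hrm : (r:ℕ) = m := by omega
    have congr2 : ∀ x ∈ Icc (0:ℝ) 1, ν (Prod.mk x ⁻¹' (⇑e.symm ⁻¹' E))
        = ENNReal.ofReal ((min k x)^m) := by
      intro x hx
      rw [key x, if_pos (fun h => absurd h hr), hν,
        box_measure m k x hk0 hk1 hx _ (le_of_eq hrm), hrm]
      simp [← ENNReal.ofReal_pow (le_min hk0.le hx.1)]
      rw [ENNReal.ofReal_pow (le_min hk0.le hx.1), ENNReal.ofReal_mono.map_min]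
    rw [hμ, setLIntegral_congr_fun measurableSet_Icc congr2,
      lint_min m k hk0.le hk1, if_neg hr]
    norm_num



/-- For the identical-decision-number strategy with parameter `k ∈ (0,1]` on `n` draws
(accept `a_r` iff `a_r ≥ k` for `r < n`, always accept at round `n`), the overall win
probability (the probability that at some round the player stops on the maximum of the
sample, having continued past all earlier rounds) equals
`k^n · ( Σ_{r=1}^{n} 1/((n-r+1)·k^(n-r+1)) - H_{n-1} )` where `H_{n-1} = Σ_{j=1}^{n-1} 1/j`. -/
theorem identical_k_overall_win_prob (n : ℕ) (hn : 2 ≤ n) (k : ℝ) (hk0 : 0 < k)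
    (hk1 : k ≤ 1) :
    (Measure.pi fun _ : Fin n => (volume : Measure ℝ).restrict (Set.Icc 0 1))
      {a | ∃ r : Fin n, (∀ j : Fin n, j < r → a j < k ∧ ∃ i, a j < a i) ∧
        ((r : ℕ) < n - 1 → k ≤ a r) ∧ ∀ i, a i ≤ a r}
      = ENNReal.ofReal (k ^ n *
          ((∑ r ∈ Finset.Icc 1 n, 1 / (((n - r + 1 : ℕ) : ℝ) * k ^ (n - r + 1)))
            - ∑ j ∈ Finset.Icc 1 (n - 1), (1 : ℝ) / j)) := by
  obtain ⟨m, rfl⟩ : ∃ m, n = m + 1 := ⟨n - 1, by omega⟩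
  have halg := algebra_main (m+1) hn k hk0
  rw [Set.setOf_exists]
  rw [measure_iUnion ?hdisj (fun r => Er_meas m k r)]
  case hdisj =>
    intro r r' hne
    rw [Function.onFun, Set.disjoint_left]
    rintro a ⟨h1, h2, h3⟩ ⟨h1', h2', h3'⟩
    rcases hne.lt_or_gt with h | h
    · obtain ⟨_, i, hi⟩ := h1' r h
      exact absurd (h3 i) (not_le.mpr hi)
    · obtain ⟨_, i, hi⟩ := h1 r' h
      exact absurd (h3' i) (not_le.mpr hi)
  rw [tsum_fintype, Finset.sum_congr rfl (fun r _ => Er_measure m k hk0 hk1 r),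
    Fin.sum_univ_eq_sum_range (fun rv => ENNReal.ofReal (if rv < m then
        k^rv * (1 - k^(m+1-rv)) / ((m+1-rv : ℕ) : ℝ)
      else k^(m+1)/((m+1 : ℕ) : ℝ) + k^m * (1-k))) (m+1),
    ← ENNReal.ofReal_sum_of_nonneg ?hnn]
  case hnn =>
    intro i _
    split_ifs with hi
    · apply div_nonneg _ (Nat.cast_nonneg _)
      exact mul_nonneg (pow_nonneg hk0.le _) (sub_nonneg.mpr (pow_le_one₀ hk0.le hk1))
    · exact add_nonneg (div_nonneg (pow_nonneg hk0.le _) (Nat.cast_nonneg _))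
        (mul_nonneg (pow_nonneg hk0.le _) (sub_nonneg.mpr hk1))
  congr 1
  rw [Finset.sum_range_succ, Finset.sum_congr rfl
      (fun i hi => if_pos (Finset.mem_range.mp hi)), if_neg (lt_irrefl m)]
  simp only [Nat.add_sub_cancel] at halg ⊢
  exact halg
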